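/- For every positive integer n, the tree T_n obtained from two disjoint stars K_{1,n} by subdividing every edge once and then adding an edge joining the two centers satisfies: the minimum cardinality of a maximal open packing of T_n is 2, while the maximum cardinality of an open packing of T_n is 2n+2. -/

import Mathlib

open SimpleGraph

/-- The open neighborhood graph of `G`: distinct vertices are adjacent iff they have a
common neighbor in `G`. -/
def ong {V : Type*} (G : SimpleGraph V) : SimpleGraph V where
  Adj u v := u ≠ v ∧ ∃ w, G.Adj u w ∧ G.Adj v w
  symm := by constructor; rintro u v ⟨h, w, h1, h2⟩; exact ⟨h.symm, w, h2, h1⟩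
  loopless := by constructor; rintro u ⟨h, -⟩; exact h rfl

/-- A set of vertices is an open packing if no two distinct members have a common neighbor. -/
def IsOpenPacking {V : Type*} (G : SimpleGraph V) (P : Set V) : Prop :=
  ∀ ⦃u⦄, u ∈ P → ∀ ⦃v⦄, v ∈ P → u ≠ v → ∀ w, ¬(G.Adj u w ∧ G.Adj v w)

/-- An independent set of vertices. -/
def IsIndep {V : Type*} (G : SimpleGraph V) (s : Set V) : Prop :=
  s.Pairwise fun u v => ¬ G.Adj u v

/-- All maximal open packings of `G` have the same cardinality. -/
def InU {V : Type*} (G : SimpleGraph V) : Prop :=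
  ∀ P Q : Set V, Maximal (IsOpenPacking G) P → Maximal (IsOpenPacking G) Q →
    P.ncard = Q.ncard

/-- All maximal independent sets of `G` have the same cardinality. -/
def WellCovered {V : Type*} (G : SimpleGraph V) : Prop :=
  ∀ P Q : Set V, Maximal (IsIndep G) P → Maximal (IsIndep G) Q → P.ncard = Q.ncard

/-- A leaf is a vertex with exactly one neighbor. -/
def IsLeaf {V : Type*} (G : SimpleGraph V) (v : V) : Prop :=
  ∃ u, G.neighborSet v = {u}

/-- A support vertex is one adjacent to a leaf. -/
def IsSupport {V : Type*} (G : SimpleGraph V) (s : V) : Prop :=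
  ∃ l, G.neighborSet l = {s}

/-- The tree `T n`: two centers (the `Sum.inl` part), joined to each other; center `i` is
joined to the `n` middle vertices `Sum.inr (Sum.inl (i, j))`, and middle vertex `(i, j)` is
joined to the leaf `Sum.inr (Sum.inr (i, j))`. -/
def Tgraph (n : ℕ) : SimpleGraph (Fin 2 ⊕ (Fin 2 × Fin n ⊕ Fin 2 × Fin n)) :=
  SimpleGraph.fromRel (fun a b =>
    (a = Sum.inl 0 ∧ b = Sum.inl 1) ∨
    (∃ i j, a = Sum.inl i ∧ b = Sum.inr (Sum.inl (i, j))) ∨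
    (∃ i j, a = Sum.inr (Sum.inl (i, j)) ∧ b = Sum.inr (Sum.inr (i, j))))

section helpers
variable {n : ℕ}

@[simp] lemma adj_CC (i i' : Fin 2) :
    (Tgraph n).Adj (Sum.inl i) (Sum.inl i') ↔ i ≠ i' := by
  fin_cases i <;> fin_cases i' <;> simp [Tgraph]

@[simp] lemma adj_CM (i : Fin 2) (p : Fin 2 × Fin n) :
    (Tgraph n).Adj (Sum.inl i) (Sum.inr (Sum.inl p)) ↔ p.1 = i := by
  obtain ⟨i', j⟩ := p; simp [Tgraph]; fin_cases i <;> fin_cases i' <;> simp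

@[simp] lemma adj_CL (i : Fin 2) (p : Fin 2 × Fin n) :
    ¬ (Tgraph n).Adj (Sum.inl i) (Sum.inr (Sum.inr p)) := by
  simp [Tgraph]

@[simp] lemma adj_MM (p q : Fin 2 × Fin n) :
    ¬ (Tgraph n).Adj (Sum.inr (Sum.inl p)) (Sum.inr (Sum.inl q)) := by
  simp [Tgraph]

@[simp] lemma adj_ML (p q : Fin 2 × Fin n) :
    (Tgraph n).Adj (Sum.inr (Sum.inl p)) (Sum.inr (Sum.inr q)) ↔ p = q := by
  obtain ⟨i, j⟩ := p; obtain ⟨i', j'⟩ := q; simp [Tgraph]; fin_cases i <;> fin_cases i' <;> simp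

@[simp] lemma adj_LL (p q : Fin 2 × Fin n) :
    ¬ (Tgraph n).Adj (Sum.inr (Sum.inr p)) (Sum.inr (Sum.inr q)) := by
  simp [Tgraph]

@[simp] lemma adj_MC (i : Fin 2) (p : Fin 2 × Fin n) :
    (Tgraph n).Adj (Sum.inr (Sum.inl p)) (Sum.inl i) ↔ p.1 = i := by
  rw [adj_comm]; simp

@[simp] lemma adj_LC (i : Fin 2) (p : Fin 2 × Fin n) :
    ¬ (Tgraph n).Adj (Sum.inr (Sum.inr p)) (Sum.inl i) := by
  rw [adj_comm]; simp

@[simp] lemma adj_LM (p q : Fin 2 × Fin n) :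
    (Tgraph n).Adj (Sum.inr (Sum.inr p)) (Sum.inr (Sum.inl q)) ↔ q = p := by
  rw [adj_comm]; simp

lemma no_common_CC {i i' : Fin 2} (hne : i ≠ i') (w) :
    ¬((Tgraph n).Adj (Sum.inl i) w ∧ (Tgraph n).Adj (Sum.inl i') w) := by
  rintro ⟨h1, h2⟩
  rcases w with k | p | p
  · simp only [adj_CC] at h1 h2
    fin_cases i <;> fin_cases i' <;> fin_cases k <;> simp_all
  · simp only [adj_CM] at h1 h2; exact hne (h1.symm.trans h2)
  · exact adj_CL _ _ h1

lemma no_common_ML (q p : Fin 2 × Fin n) (w) :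
    ¬((Tgraph n).Adj (Sum.inr (Sum.inl q)) w ∧ (Tgraph n).Adj (Sum.inr (Sum.inr p)) w) := by
  rintro ⟨h1, h2⟩
  rcases w with k | r | r <;> simp_all

lemma no_common_MM {p q : Fin 2 × Fin n} (hne : p.1 ≠ q.1) (w) :
    ¬((Tgraph n).Adj (Sum.inr (Sum.inl p)) w ∧ (Tgraph n).Adj (Sum.inr (Sum.inl q)) w) := by
  rintro ⟨h1, h2⟩
  rcases w with k | r | r
  · simp only [adj_MC] at h1 h2; exact hne (h1.trans h2.symm)
  · exact adj_MM _ _ h1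
  · simp only [adj_ML] at h1 h2; exact hne (by rw [h1, h2])

lemma no_common_LL {p q : Fin 2 × Fin n} (hne : p ≠ q) (w) :
    ¬((Tgraph n).Adj (Sum.inr (Sum.inr p)) w ∧ (Tgraph n).Adj (Sum.inr (Sum.inr q)) w) := by
  rintro ⟨h1, h2⟩
  rcases w with k | r | r
  · exact adj_LC _ _ h1
  · simp only [adj_LM] at h1 h2; exact hne (h1.symm.trans h2)
  · exact adj_LL _ _ h1

lemma singleton_packing (G : SimpleGraph (Fin 2 ⊕ (Fin 2 × Fin n ⊕ Fin 2 × Fin n))) (a) :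
    IsOpenPacking G {a} := by
  intro u hu v hv huv
  simp only [Set.mem_singleton_iff] at hu hv
  exact absurd (hu.trans hv.symm) huv

lemma pair_packing {V : Type*} {G : SimpleGraph V} {a b : V}
    (h : ∀ w, ¬(G.Adj a w ∧ G.Adj b w)) : IsOpenPacking G {a, b} := by
  intro u hu v hv huv w
  rcases hu with rfl | rfl <;> rcases hv with rfl | rfl
  · exact absurd rfl huv
  · exact h w
  · exact fun hc => h w ⟨hc.2, hc.1⟩
  · exact absurd rfl huv

end helpers

theorem stmt7 (n : ℕ) (hn : 1 ≤ n) :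
    (∃ P, Maximal (IsOpenPacking (Tgraph n)) P ∧ P.ncard = 2) ∧
    (∀ P, Maximal (IsOpenPacking (Tgraph n)) P → 2 ≤ P.ncard) ∧
    (∃ P, IsOpenPacking (Tgraph n) P ∧ P.ncard = 2 * n + 2) ∧
    (∀ P, IsOpenPacking (Tgraph n) P → P.ncard ≤ 2 * n + 2) := by
  refine ⟨?_, ?_, ?_, ?_⟩
  · -- a maximal packing of size 2
    refine ⟨{Sum.inl 0, Sum.inl 1}, ⟨pair_packing (no_common_CC (by decide)), ?_⟩,
      Set.ncard_pair (by simp)⟩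
    intro Q hQ hle v hv
    rcases v with k | ⟨i, j⟩ | ⟨i, j⟩
    · fin_cases k
      · exact Or.inl rfl
      · exact Or.inr rfl
    · exfalso
      fin_cases i
      · exact hQ hv (hle (show (Sum.inl 1 : _) ∈ _ by simp)) (by simp)
          (Sum.inl 0) ⟨by simp, by simp⟩
      · exact hQ hv (hle (show (Sum.inl 0 : _) ∈ _ by simp)) (by simp)
          (Sum.inl 1) ⟨by simp, by simp⟩
    · exfalso
      fin_cases i
      · exact hQ hv (hle (show (Sum.inl 0 : _) ∈ _ by simp)) (by simp)
          (Sum.inr (Sum.inl (0, j))) ⟨by simp, by simp⟩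
      · exact hQ hv (hle (show (Sum.inl 1 : _) ∈ _ by simp)) (by simp)
          (Sum.inr (Sum.inl (1, j))) ⟨by simp, by simp⟩
  · -- every maximal packing has ≥ 2 elements
    intro P hP
    by_contra hlt
    push_neg at hlt
    have hne : P.Nonempty := by
      by_contra h
      rw [Set.not_nonempty_iff_eq_empty] at h
      subst h
      have := hP.2 (singleton_packing _ (Sum.inl 0)) (Set.empty_subset _)
      exact this rfl
    obtain ⟨v, hv⟩ := hne
    have hsub : P = {v} := by
      refine Set.eq_singleton_iff_unique_mem.mpr ⟨hv, fun u hu => ?_⟩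
      exact (Set.ncard_le_one (Set.toFinite P)).mp (by omega) u hu v hv
    obtain ⟨u, hune, hpack⟩ : ∃ u, u ≠ v ∧ IsOpenPacking (Tgraph n) {v, u} := by
      rcases v with k | p | p
      · fin_cases k
        · exact ⟨Sum.inl 1, by simp, pair_packing (no_common_CC (by decide))⟩
        · exact ⟨Sum.inl 0, by simp,
            pair_packing (fun w hc => no_common_CC (by decide) w ⟨hc.2, hc.1⟩)⟩
      · exact ⟨Sum.inr (Sum.inr p), by simp, pair_packing (no_common_ML p p)⟩
      · exact ⟨Sum.inr (Sum.inl p), by simp,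
          pair_packing (fun w hc => no_common_ML p p w ⟨hc.2, hc.1⟩)⟩
    have h2 := hP.2 hpack (by rw [hsub]; exact fun x hx => Or.inl hx)
    have : u ∈ P := h2 (Or.inr rfl)
    rw [hsub] at this
    exact hune this
  · -- a packing of size 2n+2
    set z : Fin n := ⟨0, hn⟩ with hz
    refine ⟨(Set.range fun p : Fin 2 × Fin n => (Sum.inr (Sum.inr p) :
        Fin 2 ⊕ (Fin 2 × Fin n ⊕ Fin 2 × Fin n))) ∪
        {Sum.inr (Sum.inl (0, z)), Sum.inr (Sum.inl (1, z))}, ?_, ?_⟩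
    · intro u hu v hv huv w
      rcases hu with ⟨p, rfl⟩ | hu
      · rcases hv with ⟨q, rfl⟩ | hv
        · exact no_common_LL (fun h => huv (by rw [h])) w
        · rcases hv with rfl | rfl <;>
            exact fun hc => no_common_ML _ _ w ⟨hc.2, hc.1⟩
      · rcases hu with rfl | rfl
        · rcases hv with ⟨q, rfl⟩ | hv
          · exact no_common_ML _ _ w
          · rcases hv with rfl | rfl
            · exact absurd rfl huv
            · exact no_common_MM (p := ((0 : Fin 2), z)) (q := ((1 : Fin 2), z)) (by simp) w
        · rcases hv with ⟨q, rfl⟩ | hv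
          · exact no_common_ML _ _ w
          · rcases hv with rfl | rfl
            · exact fun hc => no_common_MM (p := ((0 : Fin 2), z)) (q := ((1 : Fin 2), z)) (by simp) w ⟨hc.2, hc.1⟩
            · exact absurd rfl huv
    · have hinj : Function.Injective fun p : Fin 2 × Fin n =>
          (Sum.inr (Sum.inr p) : Fin 2 ⊕ (Fin 2 × Fin n ⊕ Fin 2 × Fin n)) := by
        intro a b h; simpa using h
      rw [Set.ncard_union_eq (by simp [Set.disjoint_left]) (Set.toFinite _) (Set.toFinite _),
        ← Set.image_univ, Set.ncard_image_of_injective _ hinj, Set.ncard_univ,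
        Set.ncard_pair (by simp)]
      simp [Nat.card_eq_fintype_card]
  · -- upper bound 2n+2
    intro P hP
    set A : Set (Fin 2 ⊕ (Fin 2 × Fin n ⊕ Fin 2 × Fin n)) :=
      (Set.range fun j : Fin n => Sum.inr (Sum.inl (0, j))) ∪ {Sum.inl 1} with hA
    set B : Set (Fin 2 ⊕ (Fin 2 × Fin n ⊕ Fin 2 × Fin n)) :=
      (Set.range fun j : Fin n => Sum.inr (Sum.inl (1, j))) ∪ {Sum.inl 0} with hB
    set Ls : Set (Fin 2 ⊕ (Fin 2 × Fin n ⊕ Fin 2 × Fin n)) :=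
      Set.range fun p : Fin 2 × Fin n => Sum.inr (Sum.inr p) with hLs
    have adjA : ∀ x ∈ A, (Tgraph n).Adj x (Sum.inl 0) := by
      rintro x (⟨j, rfl⟩ | rfl) <;> simp
    have adjB : ∀ x ∈ B, (Tgraph n).Adj x (Sum.inl 1) := by
      rintro x (⟨j, rfl⟩ | rfl) <;> simp
    have hAcard : (P ∩ A).ncard ≤ 1 := by
      rw [Set.ncard_le_one (Set.toFinite _)]
      intro a ha b hb
      obtain ⟨haP, haA⟩ := ha
      obtain ⟨hbP, hbA⟩ := hb
      by_contra hab
      exact hP haP hbP hab (Sum.inl 0) ⟨adjA a haA, adjA b hbA⟩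
    have hBcard : (P ∩ B).ncard ≤ 1 := by
      rw [Set.ncard_le_one (Set.toFinite _)]
      intro a ha b hb
      obtain ⟨haP, haA⟩ := ha
      obtain ⟨hbP, hbA⟩ := hb
      by_contra hab
      exact hP haP hbP hab (Sum.inl 1) ⟨adjB a haA, adjB b hbA⟩
    have hLcard : (P ∩ Ls).ncard ≤ 2 * n := by
      have : Ls.ncard = 2 * n := by
        have hinj : Function.Injective fun p : Fin 2 × Fin n =>
            (Sum.inr (Sum.inr p) : Fin 2 ⊕ (Fin 2 × Fin n ⊕ Fin 2 × Fin n)) := by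
          intro a b h; simpa using h
        rw [hLs, ← Set.image_univ, Set.ncard_image_of_injective _ hinj, Set.ncard_univ]
        simp [Nat.card_eq_fintype_card]
      calc (P ∩ Ls).ncard ≤ Ls.ncard :=
            Set.ncard_le_ncard Set.inter_subset_right (Set.toFinite _)
        _ = 2 * n := this
    have cover : P ⊆ (P ∩ A) ∪ (P ∩ B) ∪ (P ∩ Ls) := by
      intro v hv
      rcases v with k | ⟨i, j⟩ | p
      · fin_cases k
        · exact Or.inl (Or.inr ⟨hv, Or.inr rfl⟩)
        · exact Or.inl (Or.inl ⟨hv, Or.inr rfl⟩)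
      · fin_cases i
        · exact Or.inl (Or.inl ⟨hv, Or.inl ⟨j, rfl⟩⟩)
        · exact Or.inl (Or.inr ⟨hv, Or.inl ⟨j, rfl⟩⟩)
      · exact Or.inr ⟨hv, p, rfl⟩
    calc P.ncard ≤ ((P ∩ A) ∪ (P ∩ B) ∪ (P ∩ Ls)).ncard :=
          Set.ncard_le_ncard cover (Set.toFinite _)
      _ ≤ ((P ∩ A) ∪ (P ∩ B)).ncard + (P ∩ Ls).ncard := Set.ncard_union_le _ _
      _ ≤ (P ∩ A).ncard + (P ∩ B).ncard + (P ∩ Ls).ncard := by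
          have := Set.ncard_union_le (P ∩ A) (P ∩ B); omega
      _ ≤ 2 * n + 2 := by omega
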